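/- Let λ0 ∈ (−2,2), let g(t) = (1/2)( t² − (4 − λ0²)/4 − log(t² + λ0²/4) ) and x_± = ±√(4 − λ0²)/2. Then there exist C > 0 and N such that for every n ≥ N and every real t with t² + λ0²/4 > 0 satisfying |t − x_+| ≥ n^{−1/2} log n and |t − x_−| ≥ n^{−1/2} log n, one has g(t) ≥ C (log n)² / n. -/

import Mathlib

noncomputable section

/-- `g(t) = Re V(t, λ₀) = (1/2)( t² − (4 − λ₀²)/4 − log(t² + λ₀²/4) )`. -/
def gRe (l0 t : ℝ) : ℝ := (1 / 2) * (t ^ 2 - (4 - l0 ^ 2) / 4 - Real.log (t ^ 2 + l0 ^ 2 / 4))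

/-- The saddle point `x₊ = √(4 − λ₀²)/2`; the other saddle point is `x₋ = −x₊`. -/
def xPlus (l0 : ℝ) : ℝ := Real.sqrt (4 - l0 ^ 2) / 2

set_option maxHeartbeats 1000000 in
/-- Away from the `n^{-1/2} log n`-neighbourhoods of the saddle points,
`Re V(t, λ₀) ≥ C (log n)²/n` for large `n`. -/
theorem gRe_lower_bound_away_from_saddle (l0 : ℝ) (hl0 : l0 ∈ Set.Ioo (-2 : ℝ) 2) :
    ∃ C : ℝ, 0 < C ∧ ∃ N : ℕ, ∀ n : ℕ, N ≤ n →
      ∀ t : ℝ, 0 < t ^ 2 + l0 ^ 2 / 4 →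
        Real.log n / Real.sqrt n ≤ |t - xPlus l0| →
        Real.log n / Real.sqrt n ≤ |t - (-xPlus l0)| →
        C * (Real.log n) ^ 2 / n ≤ gRe l0 t := by
  obtain ⟨h1, h2⟩ := hl0
  have hl0sq : l0 ^ 2 < 4 := by nlinarith
  set a := xPlus l0 with ha
  have ha2 : a ^ 2 = (4 - l0 ^ 2) / 4 := by
    rw [ha, xPlus, div_pow, Real.sq_sqrt (by nlinarith : (0:ℝ) ≤ 4 - l0 ^ 2)]
    norm_num
  refine ⟨(4 - l0 ^ 2) / 64, by nlinarith, 1, ?_⟩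
  intro n hn t hs hd1 hd2
  have hn1 : (1:ℝ) ≤ n := by exact_mod_cast hn
  have hnpos : (0:ℝ) < n := by linarith
  set δ := Real.log n / Real.sqrt n with hδ
  have hδ0 : 0 ≤ δ := div_nonneg (Real.log_nonneg hn1) (Real.sqrt_nonneg _)
  have hδ2 : δ ^ 2 = (Real.log n) ^ 2 / n := by
    rw [hδ, div_pow, Real.sq_sqrt hnpos.le]
  set s := t ^ 2 + l0 ^ 2 / 4 with hsdef
  have hss : Real.sqrt s ^ 2 = s := Real.sq_sqrt hs.le
  have hsqpos : 0 < Real.sqrt s := Real.sqrt_pos.mpr hs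
  -- log s ≤ 2(√s − 1)
  have hlog : Real.log s ≤ 2 * (Real.sqrt s - 1) := by
    have h := Real.log_le_sub_one_of_pos hsqpos
    have hls : Real.log s = 2 * Real.log (Real.sqrt s) := by
      rw [Real.log_sqrt hs.le]; ring
    linarith
  -- (√s − 1)² ≤ 2 g
  have hg1 : (Real.sqrt s - 1) ^ 2 ≤ 2 * gRe l0 t := by
    have hgval : 2 * gRe l0 t = s - 1 - Real.log s := by
      rw [gRe, hsdef]; ring_nf
    nlinarith [hss]
  -- (√s + 1)² ≤ 2(s + 1)
  have hg2 : (Real.sqrt s + 1) ^ 2 ≤ 2 * (s + 1) := by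
    nlinarith [sq_nonneg (Real.sqrt s - 1), hss]
  -- (s − 1)² ≤ 4 (s+1) g
  have hmain : (s - 1) ^ 2 ≤ 4 * (s + 1) * gRe l0 t := by
    have hmul := mul_le_mul hg1 hg2 (by positivity) (by nlinarith [sq_nonneg (Real.sqrt s - 1)])
    have hid : (Real.sqrt s - 1) ^ 2 * (Real.sqrt s + 1) ^ 2 = (s - 1) ^ 2 := by
      linear_combination (Real.sqrt s ^ 2 + s - 2) * hss
    nlinarith [hmul]
  -- factorization
  have hfac : (s - 1) ^ 2 = (t - a) ^ 2 * (t + a) ^ 2 := by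
    rw [hsdef]
    linear_combination ((t ^ 2 + l0 ^ 2 / 4 - 1) + (t ^ 2 - a ^ 2)) * ha2
  have hmain' : (t - a) ^ 2 * (t + a) ^ 2 ≤ 4 * (s + 1) * gRe l0 t := by
    rw [← hfac]; exact hmain
  have hm1 : δ ^ 2 ≤ (t - a) ^ 2 := by
    have := pow_le_pow_left₀ hδ0 hd1 2
    rwa [sq_abs] at this
  have hm2 : δ ^ 2 ≤ (t + a) ^ 2 := by
    have := pow_le_pow_left₀ hδ0 hd2 2
    rw [sq_abs] at this
    rw [sub_neg_eq_add] at this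
    exact this
  have ha1 : a ^ 2 ≤ 1 := by rw [ha2]; nlinarith [sq_nonneg l0]
  have hb1 : l0 ^ 2 / 4 < 1 := by linarith
  have htar : (4 - l0 ^ 2) / 64 * Real.log n ^ 2 / n = a ^ 2 / 16 * δ ^ 2 := by
    rw [hδ2, ha2]; ring
  rw [htar]
  have hδsq : 0 ≤ δ ^ 2 := sq_nonneg δ
  clear_value a δ s
  have hkey : δ ^ 2 * (t ^ 2 + a ^ 2) / 2 ≤ 4 * (s + 1) * gRe l0 t := by
    rcases le_total ((t - a) ^ 2) ((t + a) ^ 2) with hc | hc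
    · have hM : (t ^ 2 + a ^ 2) / 2 ≤ (t + a) ^ 2 := by nlinarith
      nlinarith [mul_nonneg (sub_nonneg.2 hm1) (sq_nonneg (t + a)),
        mul_nonneg hδsq (sub_nonneg.2 hM)]
    · have hM : (t ^ 2 + a ^ 2) / 2 ≤ (t - a) ^ 2 := by nlinarith
      nlinarith [mul_nonneg (sub_nonneg.2 hm2) (sq_nonneg (t - a)),
        mul_nonneg hδsq (sub_nonneg.2 hM)]
  have hg0 : a ^ 2 / 16 * δ ^ 2 * (4 * (s + 1)) ≤ gRe l0 t * (4 * (s + 1)) := by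
    nlinarith [hkey, hsdef,
      mul_nonneg hδsq (mul_nonneg (sub_nonneg.2 ha1) (sq_nonneg t)),
      mul_nonneg (mul_nonneg hδsq (sq_nonneg a)) (by nlinarith : (0:ℝ) ≤ 4 - l0 ^ 2)]
  exact le_of_mul_le_mul_right hg0 (by positivity)

end
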